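/- arXiv:2409.10924 — 2 statements merged into one kernel-verified Lean document; each statement's English description precedes it below -/
import Mathlib

section
/- For any sequences x ∈ Z_q^n, y ∈ Z_q^m and any path P in G_{x,y} from v_{n,m} to v_{0,0}, deleting from y the positions f_I(P) (second indices of type-3 arcs in P) yields the same sequence as deleting from x the positions f_D(P) (first indices of type-1 arcs in P): D_{f_I(P)}(y) = D_{f_D(P)}(x). -/
open Classical

variable {α : Type*}

/-- One single-symbol insertion or deletion step between sequences. -/
def EditStep (x y : List α) : Prop :=
  (∃ i a, y = x.insertIdx i a) ∨ (∃ i a, x = y.insertIdx i a)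

/-- The indel distance: the minimum number of single-symbol insertions and
deletions transforming `x` into `y`. -/
noncomputable def indel (x y : List α) : ℕ :=
  sInf {n | ∃ f : ℕ → List α, f 0 = x ∧ f n = y ∧ ∀ i < n, EditStep (f i) (f (i + 1))}

/-- The indel-distance table `h i j = d(x_[1..i], y_[1..j])`. -/
noncomputable def hh (x y : List α) (i j : ℕ) : ℕ :=
  indel (x.take i) (y.take j)

/-- Delete the (1-indexed) positions in the finite set `S` from `x`. -/
def delF (x : List α) (S : Finset ℕ) : List α :=
  ((x.zipIdx.map Prod.swap).filter fun p => p.1 + 1 ∉ S).map Prod.snd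

/-- Delete the (1-indexed) positions in the set `S` from `x`. -/
noncomputable def delS (x : List α) (S : Set ℕ) : List α :=
  ((x.zipIdx.map Prod.swap).filter fun p => decide (p.1 + 1 ∉ S)).map Prod.snd

/-- Type-1 arc `(v_{i,j}, v_{i-1,j})` when `h i j = h (i-1) j + 1`. -/
def IsArc1 (x y : List α) (p q : ℕ × ℕ) : Prop :=
  1 ≤ p.1 ∧ p.1 ≤ x.length ∧ p.2 ≤ y.length ∧ q = (p.1 - 1, p.2) ∧
    hh x y p.1 p.2 = hh x y (p.1 - 1) p.2 + 1

/-- Type-2 arc `(v_{i,j}, v_{i-1,j-1})` when `x_i = y_j`. -/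
def IsArc2 (x y : List α) (p q : ℕ × ℕ) : Prop :=
  1 ≤ p.1 ∧ p.1 ≤ x.length ∧ 1 ≤ p.2 ∧ p.2 ≤ y.length ∧ q = (p.1 - 1, p.2 - 1) ∧
    x[p.1 - 1]? = y[p.2 - 1]?

/-- Type-3 arc `(v_{i,j}, v_{i,j-1})` when `h i j = h i (j-1) + 1`. -/
def IsArc3 (x y : List α) (p q : ℕ × ℕ) : Prop :=
  p.1 ≤ x.length ∧ 1 ≤ p.2 ∧ p.2 ≤ y.length ∧ q = (p.1, p.2 - 1) ∧
    hh x y p.1 p.2 = hh x y p.1 (p.2 - 1) + 1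

/-- Arcs of the digraph `G_{x,y}`. -/
def IsArc (x y : List α) (p q : ℕ × ℕ) : Prop :=
  IsArc1 x y p q ∨ IsArc2 x y p q ∨ IsArc3 x y p q

/-- `P` is a path in `G_{x,y}` from `v_{n,m}` to `v_{0,0}`. -/
def IsPath (x y : List α) (P : List (ℕ × ℕ)) : Prop :=
  P.Chain' (IsArc x y) ∧ P.head? = some (x.length, y.length) ∧ P.getLast? = some (0, 0)

/-- Number of arcs of a path `P` satisfying the arc predicate `A`. -/
noncomputable def countArc (A : ℕ × ℕ → ℕ × ℕ → Prop) (P : List (ℕ × ℕ)) : ℕ :=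
  (P.zip P.tail).countP fun pq => decide (A pq.1 pq.2)

/-- First indices of the type-1 arcs of `P`. -/
def fD (x y : List α) (P : List (ℕ × ℕ)) : Set ℕ :=
  { i | ∃ pq ∈ P.zip P.tail, IsArc1 x y pq.1 pq.2 ∧ pq.1.1 = i }

/-- Second indices of the type-3 arcs of `P`. -/
def fI (x y : List α) (P : List (ℕ × ℕ)) : Set ℕ :=
  { j | ∃ pq ∈ P.zip P.tail, IsArc3 x y pq.1 pq.2 ∧ pq.1.2 = j }

/-- The single-deletion ball of `x`. -/
def delBall (x : List α) : Set (List α) :=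
  { z | ∃ j, 1 ≤ j ∧ j ≤ x.length ∧ z = delF x {j} }

/-- `L^{(1)}(x)`: sequences (other than `x`) obtained from `x` by a single
insertion followed by a single deletion. -/
def L1 (x : List α) : Set (List α) :=
  { y | y ≠ x ∧ ∃ s, 1 ≤ s ∧ s ≤ x.length + 1 ∧ ∃ a : α, ∃ j, 1 ≤ j ∧ j ≤ x.length + 1 ∧
      y = delF (x.insertIdx (s - 1) a) {j} }

/-- `x ∈ E_{n,q,t}`: any `t` deletion positions are uniquely detectable. -/
def Detects (x : List α) (t : ℕ) : Prop :=
  ∀ S S' : Finset ℕ, S ⊆ Finset.Icc 1 x.length → S' ⊆ Finset.Icc 1 x.length →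
    S.card = t → S'.card = t → delF x S = delF x S' → S = S'

/-- `x` with the adjacent (1-indexed) symbols `x_i` and `x_{i+1}` swapped. -/
def swapAdj (x : List α) (i : ℕ) : List α :=
  x.take (i - 1) ++ ((x.drop (i - 1)).take 2).reverse ++ x.drop (i + 1)

/-- The partial order on paths of `G_{x,y}`. -/
def PathLE (P Q : List (ℕ × ℕ)) : Prop :=
  ∀ j : ℕ, sInf {i | (i, j) ∈ P} ≤ sInf {i | (i, j) ∈ Q} ∧
    sSup {i | (i, j) ∈ P} ≤ sSup {i | (i, j) ∈ Q}

/-- The Wagner–Fischer matrix. -/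
def wfH [DecidableEq α] (x y : List α) : ℕ → ℕ → ℕ
  | i, 0 => i
  | 0, j + 1 => j + 1
  | i + 1, j + 1 =>
      min (wfH x y (i + 1) j + 1)
        (min (wfH x y i (j + 1) + 1)
          (wfH x y i j + if x[i]? = y[j]? then 0 else 2))


lemma delS_congr' (z : List α) {S T : Set ℕ}
    (h : ∀ k, 1 ≤ k → k ≤ z.length → (k ∈ S ↔ k ∈ T)) : delS z S = delS z T := by
  unfold delS
  congr 1
  apply List.filter_congr
  intro p hp
  have h1 : p.1 < z.length := by
    obtain ⟨q, hq, rfl⟩ := List.mem_map.mp hp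
    simpa using List.snd_lt_of_mem_zipIdx hq
  simp only [decide_eq_decide]
  have := h (p.1 + 1) (by omega) (by omega)
  tauto

lemma delS_append_singleton (z : List α) (a : α) (S : Set ℕ) :
    delS (z ++ [a]) S = delS z S ++ if z.length + 1 ∈ S then [] else [a] := by
  unfold delS
  rw [List.zipIdx_append, List.map_append, List.filter_append, List.map_append]
  congr 1
  by_cases h : z.length + 1 ∈ S <;> simp [h]

lemma arc_le {x y : List α} {p q : ℕ × ℕ} (h : IsArc x y p q) :
    q.1 ≤ p.1 ∧ q.2 ≤ p.2 := by
  rcases h with ⟨_, _, _, hq, _⟩ | ⟨_, _, _, _, hq, _⟩ | ⟨_, _, _, hq, _⟩ <;>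
    subst hq <;> exact ⟨by simp, by simp⟩

lemma chain_bound {x y : List α} :
    ∀ (P : List (ℕ × ℕ)) (p : ℕ × ℕ), P.Chain' (IsArc x y) → P.head? = some p →
      ∀ r ∈ P, r.1 ≤ p.1 ∧ r.2 ≤ p.2 := by
  intro P
  induction P with
  | nil => intro p _ h; simp at h
  | cons a rest ih =>
    intro p hc hh r hr
    have hap : a = p := by simpa using hh
    subst hap
    rw [List.mem_cons] at hr
    rcases hr with rfl | hr
    · exact ⟨le_refl _, le_refl _⟩
    · rcases rest with _ | ⟨q, rest'⟩
      · simp at hr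
      · have harc : IsArc x y a q := (List.isChain_cons_cons.mp hc).1
        have hc' : (q :: rest').Chain' (IsArc x y) := (List.isChain_cons_cons.mp hc).2
        have := ih q hc' rfl r hr
        have hle := arc_le harc
        exact ⟨le_trans this.1 hle.1, le_trans this.2 hle.2⟩

lemma fD_bound {x y : List α} {P : List (ℕ × ℕ)} {p : ℕ × ℕ}
    (hc : P.Chain' (IsArc x y)) (hh : P.head? = some p) :
    ∀ a ∈ fD x y P, 1 ≤ a ∧ a ≤ p.1 := by
  rintro a ⟨pq, hpq, harc, rfl⟩
  refine ⟨harc.1, ?_⟩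
  have hmem : pq.1 ∈ P := (List.of_mem_zip (by exact hpq : (pq.1, pq.2) ∈ P.zip P.tail)).1
  exact (chain_bound P p hc hh pq.1 hmem).1

lemma fI_bound {x y : List α} {P : List (ℕ × ℕ)} {p : ℕ × ℕ}
    (hc : P.Chain' (IsArc x y)) (hh : P.head? = some p) :
    ∀ a ∈ fI x y P, 1 ≤ a ∧ a ≤ p.2 := by
  rintro a ⟨pq, hpq, harc, rfl⟩
  refine ⟨harc.2.1, ?_⟩
  have hmem : pq.1 ∈ P := (List.of_mem_zip (by exact hpq : (pq.1, pq.2) ∈ P.zip P.tail)).1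
  exact (chain_bound P p hc hh pq.1 hmem).2

lemma fD_cons {x y : List α} {p q : ℕ × ℕ} {rest : List (ℕ × ℕ)} {a : ℕ} :
    a ∈ fD x y (p :: q :: rest) ↔
      (IsArc1 x y p q ∧ p.1 = a) ∨ a ∈ fD x y (q :: rest) := by
  unfold fD
  constructor
  · rintro ⟨pq, hpq, harc, rfl⟩
    simp only [List.tail_cons, List.zip_cons_cons, List.mem_cons] at hpq
    rcases hpq with rfl | hpq
    · exact Or.inl ⟨harc, rfl⟩
    · exact Or.inr ⟨pq, hpq, harc, rfl⟩
  · rintro (⟨harc, rfl⟩ | ⟨pq, hpq, harc, rfl⟩)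
    · exact ⟨(p, q), by simp, harc, rfl⟩
    · exact ⟨pq, by simp only [List.tail_cons, List.zip_cons_cons, List.mem_cons]; right; exact hpq,
        harc, rfl⟩

lemma fI_cons {x y : List α} {p q : ℕ × ℕ} {rest : List (ℕ × ℕ)} {a : ℕ} :
    a ∈ fI x y (p :: q :: rest) ↔
      (IsArc3 x y p q ∧ p.2 = a) ∨ a ∈ fI x y (q :: rest) := by
  unfold fI
  constructor
  · rintro ⟨pq, hpq, harc, rfl⟩
    simp only [List.tail_cons, List.zip_cons_cons, List.mem_cons] at hpq
    rcases hpq with rfl | hpq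
    · exact Or.inl ⟨harc, rfl⟩
    · exact Or.inr ⟨pq, hpq, harc, rfl⟩
  · rintro (⟨harc, rfl⟩ | ⟨pq, hpq, harc, rfl⟩)
    · exact ⟨(p, q), by simp, harc, rfl⟩
    · exact ⟨pq, by simp only [List.tail_cons, List.zip_cons_cons, List.mem_cons]; right; exact hpq,
        harc, rfl⟩

lemma main_aux (x y : List α) :
    ∀ P : List (ℕ × ℕ), P.Chain' (IsArc x y) → P.getLast? = some (0, 0) →
      ∀ i j : ℕ, P.head? = some (i, j) →
        delS (y.take j) (fI x y P) = delS (x.take i) (fD x y P) := by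
  intro P
  induction P with
  | nil => intro _ hl; simp at hl
  | cons p rest ih =>
    intro hc hl i j hhd
    have hp : p = (i, j) := by simpa using hhd
    subst hp
    match rest with
    | [] =>
      have : (i, j) = ((0 : ℕ), (0 : ℕ)) := by simpa using hl
      have hi : i = 0 := congrArg Prod.fst this
      have hj : j = 0 := congrArg Prod.snd this
      subst hi; subst hj
      simp [delS, fI, fD]
    | q :: rest' =>
      have harc : IsArc x y (i, j) q := (List.isChain_cons_cons.mp hc).1
      have hc' : (q :: rest').Chain' (IsArc x y) := (List.isChain_cons_cons.mp hc).2
      have hl' : (q :: rest').getLast? = some (0, 0) := by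
        rwa [List.getLast?_cons_cons] at hl
      have ihq := ih hc' hl' q.1 q.2 (by simp)
      have hDb := fD_bound hc' (show (q :: rest').head? = some q by simp)
      have hIb := fI_bound hc' (show (q :: rest').head? = some q by simp)
      rcases harc with h1 | h2 | h3
      · -- type-1 arc : q = (i-1, j)
        have h1' := h1
        obtain ⟨hi1, hix, hjy, hq, _⟩ := h1
        simp only at hi1 hix hjy hq
        -- not a type-3 arc
        have hnot3 : ¬ IsArc3 x y (i, j) q := by
          rintro ⟨_, _, _, hq3, _⟩; rw [hq] at hq3
          have : i - 1 = i := congrArg Prod.fst hq3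
          omega
        have hfI : fI x y ((i, j) :: q :: rest') = fI x y (q :: rest') := by
          ext a; rw [fI_cons]; constructor
          · rintro (⟨h3, _⟩ | h) ; exact absurd h3 hnot3; exact h
          · exact Or.inr
        have hfD : ∀ a, a ∈ fD x y ((i, j) :: q :: rest') ↔
            a = i ∨ a ∈ fD x y (q :: rest') := by
          intro a; rw [fD_cons]; constructor
          · rintro (⟨_, rfl⟩ | h); exact Or.inl rfl; exact Or.inr h
          · rintro (rfl | h)
            · exact Or.inl ⟨h1', rfl⟩
            · exact Or.inr h
        subst hq
        simp only at ihq hDb hIb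
        have hlen : (x.take (i - 1)).length = i - 1 := by
          rw [List.length_take]; omega
        have hiS : i ∈ fD x y ((i, j) :: (i - 1, j) :: rest') := (hfD i).mpr (Or.inl rfl)
        have hget : x[i - 1]? = some (x[i - 1]'(by omega)) :=
          List.getElem?_eq_getElem (by omega)
        have htake : x.take i = x.take (i - 1) ++ [x[i - 1]'(by omega)] := by
          conv_lhs => rw [show i = (i - 1) + 1 from by omega]
          rw [List.take_succ, hget]
          rfl
        rw [hfI, htake, delS_append_singleton, hlen,
          show i - 1 + 1 = i from by omega, if_pos hiS, List.append_nil]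
        rw [delS_congr' (x.take (i - 1))
          (T := fD x y ((i - 1, j) :: rest'))]
        · exact ihq
        · intro k hk1 hk2
          rw [hlen] at hk2
          rw [hfD]
          constructor
          · rintro (rfl | h); omega; exact h
          · exact Or.inr
      · -- type-2 arc : q = (i-1, j-1), x_i = y_j
        have h2' := h2
        obtain ⟨hi1, hix, hj1, hjy, hq, heq⟩ := h2
        simp only at hi1 hix hj1 hjy hq heq
        subst hq
        simp only at ihq hDb hIb
        have hnot1 : ¬ IsArc1 x y (i, j) (i - 1, j - 1) := by
          rintro ⟨_, _, _, hq1, _⟩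
          have : j - 1 = j := congrArg Prod.snd hq1
          omega
        have hnot3 : ¬ IsArc3 x y (i, j) (i - 1, j - 1) := by
          rintro ⟨_, _, _, hq3, _⟩
          have : i - 1 = i := congrArg Prod.fst hq3
          omega
        have hfD : fD x y ((i, j) :: (i - 1, j - 1) :: rest') =
            fD x y ((i - 1, j - 1) :: rest') := by
          ext a; rw [fD_cons]
          exact ⟨fun h => h.elim (fun h => absurd h.1 hnot1) id, Or.inr⟩
        have hfI : fI x y ((i, j) :: (i - 1, j - 1) :: rest') =
            fI x y ((i - 1, j - 1) :: rest') := by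
          ext a; rw [fI_cons]
          exact ⟨fun h => h.elim (fun h => absurd h.1 hnot3) id, Or.inr⟩
        have hgx : x[i - 1]? = some (x[i - 1]'(by omega)) :=
          List.getElem?_eq_getElem (by omega)
        have hgy : y[j - 1]? = some (y[j - 1]'(by omega)) :=
          List.getElem?_eq_getElem (by omega)
        have hsym : x[i - 1]'(by omega) = y[j - 1]'(by omega) := by
          rw [hgx, hgy] at heq
          exact Option.some_injective _ heq
        have htakex : x.take i = x.take (i - 1) ++ [x[i - 1]'(by omega)] := by
          conv_lhs => rw [show i = (i - 1) + 1 from by omega]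
          rw [List.take_succ, hgx]; rfl
        have htakey : y.take j = y.take (j - 1) ++ [y[j - 1]'(by omega)] := by
          conv_lhs => rw [show j = (j - 1) + 1 from by omega]
          rw [List.take_succ, hgy]; rfl
        have hlenx : (x.take (i - 1)).length = i - 1 := by
          rw [List.length_take]; omega
        have hleny : (y.take (j - 1)).length = j - 1 := by
          rw [List.length_take]; omega
        have hiS : i ∉ fD x y ((i - 1, j - 1) :: rest') := fun h => by
          have := hDb i h; omega
        have hjS : j ∉ fI x y ((i - 1, j - 1) :: rest') := fun h => by
          have := hIb j h; omega
        rw [hfD, hfI, htakex, htakey, delS_append_singleton, delS_append_singleton,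
          hlenx, hleny, show i - 1 + 1 = i from by omega,
          show j - 1 + 1 = j from by omega, if_neg hiS, if_neg hjS, ihq, hsym]
      · -- type-3 arc : q = (i, j-1)
        have h3' := h3
        obtain ⟨hix, hj1, hjy, hq, _⟩ := h3
        simp only at hix hj1 hjy hq
        have hnot1 : ¬ IsArc1 x y (i, j) q := by
          rintro ⟨hi1, _, _, hq1, _⟩
          rw [hq] at hq1
          have : i = i - 1 := congrArg Prod.fst hq1
          simp only at hi1
          omega
        have hfD : fD x y ((i, j) :: q :: rest') = fD x y (q :: rest') := by
          ext a; rw [fD_cons]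
          exact ⟨fun h => h.elim (fun h => absurd h.1 hnot1) id, Or.inr⟩
        have hfI : ∀ a, a ∈ fI x y ((i, j) :: q :: rest') ↔
            a = j ∨ a ∈ fI x y (q :: rest') := by
          intro a; rw [fI_cons]; constructor
          · rintro (⟨_, rfl⟩ | h); exact Or.inl rfl; exact Or.inr h
          · rintro (rfl | h)
            · exact Or.inl ⟨h3', rfl⟩
            · exact Or.inr h
        subst hq
        simp only at ihq hDb hIb
        have hleny : (y.take (j - 1)).length = j - 1 := by
          rw [List.length_take]; omega
        have hjS : j ∈ fI x y ((i, j) :: (i, j - 1) :: rest') := (hfI j).mpr (Or.inl rfl)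
        have hgy : y[j - 1]? = some (y[j - 1]'(by omega)) :=
          List.getElem?_eq_getElem (by omega)
        have htakey : y.take j = y.take (j - 1) ++ [y[j - 1]'(by omega)] := by
          conv_lhs => rw [show j = (j - 1) + 1 from by omega]
          rw [List.take_succ, hgy]; rfl
        rw [hfD, htakey, delS_append_singleton, hleny,
          show j - 1 + 1 = j from by omega, if_pos hjS, List.append_nil]
        rw [delS_congr' (y.take (j - 1))
          (T := fI x y ((i, j - 1) :: rest'))]
        · exact ihq
        · intro k hk1 hk2
          rw [hleny] at hk2
          rw [hfI]
          constructor
          · rintro (rfl | h); omega; exact h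
          · exact Or.inr

/-- `D_{f_I(P)}(y) = D_{f_D(P)}(x)` for any path `P` in `G_{x,y}`. -/
theorem del_fI_eq_del_fD {α : Type*} (x y : List α) (P : List (ℕ × ℕ))
    (hP : IsPath x y P) :
    delS y (fI x y P) = delS x (fD x y P) := by
  obtain ⟨hc, hhd, hl⟩ := hP
  have := main_aux x y P hc hl x.length y.length hhd
  simpa using this
end

section
/- For x ∈ Z_q^n and y ∈ L^{(1)}(x) (so d(x,y) = 2 and len(y) = n), every path P in G_{x,y} from v_{n,n} to v_{0,0} contains exactly one type-1 arc and exactly one type-3 arc; hence |f_I(P)| = |f_D(P)| = 1. -/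
open Classical

variable {α : Type*}

/-! ### Auxiliary machinery -/

section Aux

/-- `ReachesN m u v`: there is an edit chain of length `m` from `u` to `v`. -/
def ReachesN (m : ℕ) (u v : List α) : Prop :=
  ∃ f : ℕ → List α, f 0 = u ∧ f m = v ∧ ∀ i < m, EditStep (f i) (f (i + 1))

lemma indel_eq_sInf (u v : List α) : indel u v = sInf {m | ReachesN m u v} := rfl

lemma reachesN_zero (u : List α) : ReachesN 0 u u :=
  ⟨fun _ => u, rfl, rfl, fun i hi => absurd hi (by omega)⟩

lemma reachesN_zero_eq {u v : List α} (h : ReachesN 0 u v) : u = v := by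
  obtain ⟨f, h0, hm, _⟩ := h; rw [← h0, hm]

lemma reachesN_succ_left {u w v : List α} {m : ℕ} (h : EditStep u w) (hr : ReachesN m w v) :
    ReachesN (m + 1) u v := by
  obtain ⟨f, h0, hm, hs⟩ := hr
  refine ⟨fun i => if i = 0 then u else f (i - 1), by simp, by simp [hm], ?_⟩
  intro i hi
  cases i with
  | zero => simpa [h0] using h
  | succ k =>
    have := hs k (by omega)
    simpa using this

lemma editStep_symm {u v : List α} (h : EditStep u v) : EditStep v u := h.elim Or.inr Or.inl

lemma editStep_single {u v : List α} (h : EditStep u v) : ReachesN 1 u v :=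
  reachesN_succ_left h (reachesN_zero v)

lemma reachesN_destruct {m : ℕ} {u v : List α} (h : ReachesN (m + 1) u v) :
    ∃ w, EditStep u w ∧ ReachesN m w v := by
  obtain ⟨f, h0, hm, hs⟩ := h
  exact ⟨f 1, h0 ▸ hs 0 (by omega), ⟨fun i => f (i + 1), rfl, hm, fun i hi => hs (i + 1) (by omega)⟩⟩

lemma reachesN_trans {k : ℕ} {w : List α} :
    ∀ {m : ℕ} {u v : List α}, ReachesN m u v → ReachesN k v w → ReachesN (m + k) u w := by
  intro m
  induction m with
  | zero =>
    intro u v h1 h2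
    obtain rfl := reachesN_zero_eq h1
    rw [Nat.zero_add]; exact h2
  | succ n ih =>
    intro u v h1 h2
    obtain ⟨t, hstep, hr⟩ := reachesN_destruct h1
    have h3 := reachesN_succ_left hstep (ih hr h2)
    have he : n + k + 1 = n + 1 + k := by omega
    rwa [he] at h3

lemma reachesN_symm : ∀ {m : ℕ} {u v : List α}, ReachesN m u v → ReachesN m v u := by
  intro m
  induction m with
  | zero =>
    intro u v h
    obtain rfl := reachesN_zero_eq h
    exact reachesN_zero u
  | succ n ih =>
    intro u v h
    obtain ⟨t, hstep, hr⟩ := reachesN_destruct h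
    exact reachesN_trans (ih hr) (editStep_single (editStep_symm hstep))

lemma exists_eraseIdx_sublist {s w : List α} (h : s.Sublist w) (hne : s ≠ w) :
    ∃ i < w.length, s.Sublist (w.eraseIdx i) := by
  induction h with
  | slnil => exact absurd rfl hne
  | @cons l₁ l₂ a h ih => exact ⟨0, by simp, by simpa using h⟩
  | @cons_cons l₁ l₂ a h ih =>
    by_cases hl : l₁ = l₂
    · exact absurd (by rw [hl]) hne
    · obtain ⟨i, hi, hsub⟩ := ih hl
      exact ⟨i + 1, by simp; omega, by simpa using List.Sublist.cons_cons a hsub⟩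

lemma insertIdx_eraseIdx_getElem :
    ∀ (l : List α) (i : ℕ) (h : i < l.length), (l.eraseIdx i).insertIdx i (l[i]'h) = l := by
  intro l
  induction l with
  | nil => intro i h; simp at h
  | cons a t ih =>
    intro i h
    cases i with
    | zero => simp
    | succ n => simpa using ih n (by simpa using h)

lemma editStep_eraseIdx (w : List α) (i : ℕ) (h : i < w.length) :
    EditStep w (w.eraseIdx i) :=
  Or.inr ⟨i, w[i]'h, (insertIdx_eraseIdx_getElem w i h).symm⟩

lemma reachesN_of_sublist (w s : List α) (h : s.Sublist w) :
    ReachesN (w.length - s.length) w s := by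
  generalize hn : w.length - s.length = n
  induction n generalizing w s with
  | zero =>
    have : s = w := h.eq_of_length_le (by have := h.length_le; omega)
    subst this
    exact reachesN_zero s
  | succ n ih =>
    have hne : s ≠ w := by
      intro he; subst he; omega
    obtain ⟨i, hi, hsub⟩ := exists_eraseIdx_sublist h hne
    have hlen : (w.eraseIdx i).length = w.length - 1 := by
      rw [List.length_eraseIdx]; simp [hi]
    have hsl : s.length ≤ (w.eraseIdx i).length := hsub.length_le
    exact reachesN_succ_left (editStep_eraseIdx w i hi) (ih (w.eraseIdx i) s hsub (by omega))

lemma indel_le {m : ℕ} {u v : List α} (h : ReachesN m u v) : indel u v ≤ m :=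
  Nat.sInf_le h

lemma reachesN_total (u v : List α) : ReachesN (u.length + v.length) u v := by
  have h1 : ReachesN u.length u [] := by
    simpa using reachesN_of_sublist u [] (List.nil_sublist u)
  have h2 : ReachesN v.length ([] : List α) v := by
    refine reachesN_symm ?_
    simpa using reachesN_of_sublist v [] (List.nil_sublist v)
  exact reachesN_trans h1 h2

lemma reachesN_indel (u v : List α) : ReachesN (indel u v) u v := by
  have h : sInf {m | ReachesN m u v} ∈ {m | ReachesN m u v} :=
    Nat.sInf_mem ⟨u.length + v.length, reachesN_total u v⟩
  exact h

/-! ### Longest common subsequence -/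

/-- Length of the longest common subsequence. -/
noncomputable def lcs (u v : List α) : ℕ :=
  sSup {n | ∃ s : List α, s.Sublist u ∧ s.Sublist v ∧ s.length = n}

lemma lcsSet_nonempty (u v : List α) :
    {n | ∃ s : List α, s.Sublist u ∧ s.Sublist v ∧ s.length = n}.Nonempty :=
  ⟨0, [], List.nil_sublist u, List.nil_sublist v, rfl⟩

lemma lcsSet_bdd (u v : List α) :
    BddAbove {n | ∃ s : List α, s.Sublist u ∧ s.Sublist v ∧ s.length = n} :=
  ⟨u.length, fun n hn => by obtain ⟨s, h1, _, rfl⟩ := hn; exact h1.length_le⟩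

lemma exists_lcs (u v : List α) :
    ∃ s : List α, s.Sublist u ∧ s.Sublist v ∧ s.length = lcs u v :=
  Nat.sSup_mem (lcsSet_nonempty u v) (lcsSet_bdd u v)

lemma le_lcs {s u v : List α} (h1 : s.Sublist u) (h2 : s.Sublist v) :
    s.length ≤ lcs u v :=
  le_csSup (lcsSet_bdd u v) ⟨s, h1, h2, rfl⟩

lemma lcs_le_left (u v : List α) : lcs u v ≤ u.length := by
  obtain ⟨s, h1, _, hl⟩ := exists_lcs u v
  rw [← hl]; exact h1.length_le

lemma lcs_le_right (u v : List α) : lcs u v ≤ v.length := by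
  obtain ⟨s, _, h2, hl⟩ := exists_lcs u v
  rw [← hl]; exact h2.length_le

lemma lcs_self (v : List α) : lcs v v = v.length :=
  le_antisymm (lcs_le_left v v) (le_lcs (List.Sublist.refl v) (List.Sublist.refl v))

lemma lcs_mono_left {u u' : List α} (v : List α) (h : u.Sublist u') : lcs u v ≤ lcs u' v := by
  obtain ⟨s, h1, h2, hl⟩ := exists_lcs u v
  rw [← hl]; exact le_lcs (h1.trans h) h2

lemma insertIdx_eq_take_cons_drop (l : List α) (i : ℕ) (a : α) (h : i ≤ l.length) :
    l.insertIdx i a = l.take i ++ a :: l.drop i := by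
  induction l generalizing i with
  | nil =>
    have : i = 0 := by simpa using h
    simp [this]
  | cons b t ih =>
    cases i with
    | zero => simp
    | succ n => simp [ih n (by simpa using h)]

lemma sublist_insertIdx (u : List α) (i : ℕ) (a : α) : u.Sublist (u.insertIdx i a) := by
  rcases le_or_gt i u.length with hi | hi
  · rw [insertIdx_eq_take_cons_drop u i a hi]
    conv_lhs => rw [← List.take_append_drop i u]
    exact List.Sublist.append (List.Sublist.refl _) (List.sublist_cons_self _ _)
  · rw [List.insertIdx_of_length_lt (x := a) hi]

lemma lcs_insertIdx_le (u v : List α) (i : ℕ) (a : α) :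
    lcs (u.insertIdx i a) v ≤ lcs u v + 1 := by
  rcases le_or_gt i u.length with hi | hi
  · obtain ⟨s, hsu, hsv, hlen⟩ := exists_lcs (u.insertIdx i a) v
    rw [insertIdx_eq_take_cons_drop u i a hi, List.sublist_append_iff] at hsu
    obtain ⟨s1, s2, rfl, h1, h2⟩ := hsu
    rw [List.sublist_cons_iff] at h2
    rcases h2 with h2 | ⟨r, rfl, hr⟩
    · have hu : (s1 ++ s2).Sublist u := by
        have := List.Sublist.append h1 h2
        rwa [List.take_append_drop] at this
      have := le_lcs hu hsv
      omega
    · have ht : (s1 ++ r).Sublist u := by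
        have := List.Sublist.append h1 hr
        rwa [List.take_append_drop] at this
      have hv : (s1 ++ r).Sublist v := by
        refine List.Sublist.trans ?_ hsv
        exact (List.append_sublist_append_left s1).mpr (List.sublist_cons_self a r)
      have hle2 := le_lcs ht hv
      simp only [List.length_append, List.length_cons] at hlen hle2
      omega
  · rw [List.insertIdx_of_length_lt (x := a) hi]; omega

lemma lcs_append_singleton (u v : List α) (a : α) :
    lcs (u ++ [a]) (v ++ [a]) = lcs u v + 1 := by
  apply le_antisymm
  · obtain ⟨s, hsu, hsv, hlen⟩ := exists_lcs (u ++ [a]) (v ++ [a])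
    rw [List.sublist_append_iff] at hsu hsv
    obtain ⟨s1, s2, he1, h1, h2⟩ := hsu
    obtain ⟨t1, t2, he2, h3, h4⟩ := hsv
    rw [List.sublist_singleton] at h2 h4
    rcases h2 with h2 | h2
    · -- s = s1 sublist of u
      subst h2
      rw [List.append_nil] at he1
      subst he1
      have ht1s : t1.Sublist s := he2 ▸ List.sublist_append_left t1 t2
      have ht1u : t1.Sublist u := ht1s.trans h1
      have := le_lcs ht1u h3
      have ht2 : t2.length ≤ 1 := by
        rcases h4 with h4 | h4 <;> simp [h4]
      have : s.length = t1.length + t2.length := by rw [he2]; simp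
      omega
    · rcases h4 with h4 | h4
      · -- t2 = [], s = t1 sublist of v
        subst h4
        rw [List.append_nil] at he2
        subst he2
        have hs1s : s1.Sublist s := he1 ▸ List.sublist_append_left s1 s2
        have hs1v : s1.Sublist v := hs1s.trans h3
        have := le_lcs h1 hs1v
        have : s.length = s1.length + s2.length := by rw [he1]; simp
        have hs2 : s2.length ≤ 1 := by simp [h2]
        omega
      · -- s2 = t2 = [a]
        subst h2; subst h4
        have he3 : s1 ++ [a] = t1 ++ [a] := by rw [← he1, ← he2]
        have hst : s1 = t1 := List.append_cancel_right he3
        subst hst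
        have := le_lcs h1 h3
        have : s.length = s1.length + 1 := by rw [he1]; simp
        omega
  · obtain ⟨s, hsu, hsv, hlen⟩ := exists_lcs u v
    have := le_lcs (hsu.append (List.Sublist.refl [a])) (hsv.append (List.Sublist.refl [a]))
    simp only [List.length_append, List.length_singleton] at this
    omega

/-! ### The indel–lcs formula -/

lemma reachesN_lower (v : List α) :
    ∀ (m : ℕ) (u : List α), ReachesN m u v → u.length + v.length ≤ m + 2 * lcs u v := by
  intro m
  induction m with
  | zero =>
    intro u h
    obtain rfl := reachesN_zero_eq h
    rw [lcs_self]; omega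
  | succ n ih =>
    intro u h
    obtain ⟨w, hstep, hr⟩ := reachesN_destruct h
    have hw := ih w hr
    rcases hstep with ⟨i, a, rfl⟩ | ⟨i, a, hu⟩
    · rcases le_or_gt i u.length with hi | hi
      · have h1 : (u.insertIdx i a).length = u.length + 1 := List.length_insertIdx_of_le_length hi a
        have h2 : lcs (u.insertIdx i a) v ≤ lcs u v + 1 := lcs_insertIdx_le u v i a
        omega
      · rw [List.insertIdx_of_length_lt (x := a) hi] at hw
        omega
    · rcases le_or_gt i w.length with hi | hi
      · have h1 : u.length = w.length + 1 := by
          rw [hu]; exact List.length_insertIdx_of_le_length hi a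
        have h2 : lcs w v ≤ lcs u v := by
          rw [hu]; exact lcs_mono_left v (sublist_insertIdx w i a)
        omega
      · rw [List.insertIdx_of_length_lt (x := a) hi] at hu
        subst hu; omega

lemma indel_add_lcs (u v : List α) : indel u v + 2 * lcs u v = u.length + v.length := by
  have h2 := reachesN_lower v (indel u v) u (reachesN_indel u v)
  have h3 : lcs u v ≤ u.length := lcs_le_left u v
  have h4 : lcs u v ≤ v.length := lcs_le_right u v
  obtain ⟨s, hsu, hsv, hlen⟩ := exists_lcs u v
  have r1 : ReachesN (u.length - s.length) u s := reachesN_of_sublist u s hsu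
  have h1 : indel u v ≤ u.length - s.length + (v.length - s.length) :=
    indel_le (reachesN_trans r1 (reachesN_symm (reachesN_of_sublist v s hsv)))
  omega

lemma indel_append_singleton (u v : List α) (a : α) :
    indel (u ++ [a]) (v ++ [a]) = indel u v := by
  have h1 := indel_add_lcs (u ++ [a]) (v ++ [a])
  have h2 := indel_add_lcs u v
  rw [lcs_append_singleton u v a] at h1
  simp only [List.length_append, List.length_singleton] at h1
  omega

/-! ### hh lemmas -/

lemma hh_zero_zero (x y : List α) : hh x y 0 0 = 0 := by
  show indel (x.take 0) (y.take 0) = 0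
  simp only [List.take_zero]
  have := indel_add_lcs ([] : List α) []
  simp only [List.length_nil] at this
  omega

lemma hh_step2 (x y : List α) (i j : ℕ) (hi1 : 1 ≤ i) (hi : i ≤ x.length) (hj1 : 1 ≤ j)
    (hj : j ≤ y.length) (hxy : x[i - 1]? = y[j - 1]?) :
    hh x y i j = hh x y (i - 1) (j - 1) := by
  have hix : i - 1 < x.length := by omega
  have hjy : j - 1 < y.length := by omega
  have hx : x[i - 1]? = some (x[i - 1]'hix) := List.getElem?_eq_getElem hix
  have htx : x.take i = x.take (i - 1) ++ [x[i - 1]'hix] := by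
    conv_lhs => rw [show i = (i - 1) + 1 from by omega]
    rw [List.take_succ, hx]
    rfl
  have hty : y.take j = y.take (j - 1) ++ [x[i - 1]'hix] := by
    conv_lhs => rw [show j = (j - 1) + 1 from by omega]
    rw [List.take_succ, ← hxy, hx]
    rfl
  show indel (x.take i) (y.take j) = indel (x.take (i - 1)) (y.take (j - 1))
  rw [htx, hty, indel_append_singleton]

/-! ### Counting arcs along a path -/

lemma countArc_single (A : ℕ × ℕ → ℕ × ℕ → Prop) (p : ℕ × ℕ) : countArc A [p] = 0 := by
  simp [countArc]

lemma countArc_cons_cons (A : ℕ × ℕ → ℕ × ℕ → Prop) (p q : ℕ × ℕ) (rest : List (ℕ × ℕ)) :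
    countArc A (p :: q :: rest) = countArc A (q :: rest) + (if A p q then 1 else 0) := by
  simp only [countArc, List.tail_cons, List.zip_cons_cons, List.countP_cons]
  by_cases h : A p q <;> simp [h]

lemma path_counts (x y : List α) :
    ∀ P : List (ℕ × ℕ), ∀ i j : ℕ, P.Chain' (IsArc x y) → P.head? = some (i, j) →
      P.getLast? = some (0, 0) →
      countArc (IsArc1 x y) P + countArc (IsArc2 x y) P = i ∧
      countArc (IsArc3 x y) P + countArc (IsArc2 x y) P = j ∧
      countArc (IsArc1 x y) P + countArc (IsArc3 x y) P = hh x y i j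
  | [], i, j, _, hhd, _ => by simp at hhd
  | [p], i, j, _, hhd, hl => by
    simp only [List.head?_cons, Option.some.injEq] at hhd
    simp only [List.getLast?_singleton, Option.some.injEq] at hl
    subst hhd
    have hi : i = 0 := congrArg Prod.fst hl
    have hj : j = 0 := congrArg Prod.snd hl
    subst hi; subst hj
    simp [countArc_single, hh_zero_zero]
  | p :: q :: rest, i, j, hc, hhd, hl => by
    simp only [List.head?_cons, Option.some.injEq] at hhd
    subst hhd
    simp only [List.Chain', List.isChain_cons_cons] at hc
    obtain ⟨harc, hc2⟩ := hc
    have hl2 : (q :: rest).getLast? = some (0, 0) := by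
      rw [List.getLast?_cons_cons] at hl; exact hl
    have IH := path_counts x y (q :: rest) q.1 q.2 hc2 (by simp) hl2
    rw [countArc_cons_cons, countArc_cons_cons, countArc_cons_cons]
    rcases harc with h1 | h2 | h3
    · -- type-1 arc
      obtain ⟨ha, hb, hcy, hq, hhe⟩ := h1
      simp only at ha hb hcy hq hhe
      have hq1 : q.1 = i - 1 := by rw [hq]
      have hq2 : q.2 = j := by rw [hq]
      rw [hq1, hq2] at IH
      have hn2 : ¬ IsArc2 x y (i, j) q := by
        rintro ⟨-, -, hj1, -, hq', -⟩
        simp only at hj1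
        rw [hq] at hq'
        have : (j : ℕ) = j - 1 := by
          have := congrArg Prod.snd hq'
          simpa using this
        omega
      have hn3 : ¬ IsArc3 x y (i, j) q := by
        rintro ⟨-, -, -, hq', -⟩
        rw [hq] at hq'
        have : (i : ℕ) - 1 = i := by
          have := congrArg Prod.fst hq'
          simpa using this
        omega
      rw [if_pos (show IsArc1 x y (i, j) q from ⟨ha, hb, hcy, hq, hhe⟩),
        if_neg hn2, if_neg hn3]
      obtain ⟨e1, e2, e3⟩ := IH
      refine ⟨by omega, by omega, ?_⟩
      rw [hhe]
      omega
    · -- type-2 arc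
      obtain ⟨ha, hb, hcy, hd, hq, hhe⟩ := h2
      simp only at ha hb hcy hd hq hhe
      have hq1 : q.1 = i - 1 := by rw [hq]
      have hq2 : q.2 = j - 1 := by rw [hq]
      rw [hq1, hq2] at IH
      have hstep := hh_step2 x y i j ha hb hcy hd hhe
      have hn1 : ¬ IsArc1 x y (i, j) q := by
        rintro ⟨-, -, -, hq', -⟩
        rw [hq] at hq'
        have : (j : ℕ) - 1 = j := by
          have := congrArg Prod.snd hq'
          simpa using this
        omega
      have hn3 : ¬ IsArc3 x y (i, j) q := by
        rintro ⟨-, -, -, hq', -⟩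
        rw [hq] at hq'
        have : (i : ℕ) - 1 = i := by
          have := congrArg Prod.fst hq'
          simpa using this
        omega
      rw [if_pos (show IsArc2 x y (i, j) q from ⟨ha, hb, hcy, hd, hq, hhe⟩),
        if_neg hn1, if_neg hn3]
      obtain ⟨e1, e2, e3⟩ := IH
      rw [hstep]
      refine ⟨by omega, by omega, by omega⟩
    · -- type-3 arc
      obtain ⟨ha, hb, hcy, hq, hhe⟩ := h3
      simp only at ha hb hcy hq hhe
      have hq1 : q.1 = i := by rw [hq]
      have hq2 : q.2 = j - 1 := by rw [hq]
      rw [hq1, hq2] at IH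
      have hn1 : ¬ IsArc1 x y (i, j) q := by
        rintro ⟨hi1, -, -, hq', -⟩
        simp only at hi1
        rw [hq] at hq'
        have : (i : ℕ) = i - 1 := by
          have := congrArg Prod.fst hq'
          simpa using this
        omega
      have hn2 : ¬ IsArc2 x y (i, j) q := by
        rintro ⟨hi1, -, -, -, hq', -⟩
        simp only at hi1
        rw [hq] at hq'
        have : (i : ℕ) = i - 1 := by
          have := congrArg Prod.fst hq'
          simpa using this
        omega
      rw [if_pos (show IsArc3 x y (i, j) q from ⟨ha, hb, hcy, hq, hhe⟩),
        if_neg hn1, if_neg hn2]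
      obtain ⟨e1, e2, e3⟩ := IH
      refine ⟨by omega, by omega, ?_⟩
      rw [hhe]
      omega


/-! ### delF facts -/

lemma filter_enum_ne (z : List α) :
    ∀ j : ℕ, (((z.zipIdx.map Prod.swap).filter fun p => decide (p.1 ≠ j)).map Prod.snd) = z.eraseIdx j := by
  have key : ∀ (z : List α) (k j : ℕ),
      ((z.zipIdx k).filter fun p => decide (p.2 ≠ j + k)).map Prod.fst = z.eraseIdx j := by
    intro z
    induction z with
    | nil => intro k j; simp
    | cons a t ih =>
      intro k j
      rw [List.zipIdx_cons, List.filter_cons]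
      cases j with
      | zero =>
        rw [if_neg (by simp), List.filter_eq_self.mpr]
        · simp
        · intro p hp
          obtain ⟨p1, p2⟩ := p
          have := List.mem_zipIdx hp
          simp; omega
      | succ n =>
        rw [if_pos (by simp), List.map_cons, List.eraseIdx_cons_succ]
        rw [show n + 1 + k = n + (k + 1) by omega, ih (k + 1) n]
  intro j
  rw [List.filter_map, List.map_map]
  have h := key z 0 j
  rw [Nat.add_zero] at h
  rw [← h]
  rfl

lemma delF_singleton (z : List α) (j : ℕ) (hj : 1 ≤ j) :
    delF z {j} = z.eraseIdx (j - 1) := by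
  unfold delF
  have hcong : ((z.zipIdx.map Prod.swap).filter fun p => p.1 + 1 ∉ ({j} : Finset ℕ))
      = (z.zipIdx.map Prod.swap).filter fun p => decide (p.1 ≠ j - 1) := by
    apply List.filter_congr
    intro p _
    apply decide_eq_decide.mpr
    simp only [Finset.mem_singleton]
    omega
  rw [hcong, filter_enum_ne]

/-! ### Facts about members of `L1` -/

lemma L1_facts {x y : List α} (hy : y ∈ L1 x) :
    y ≠ x ∧ y.length = x.length ∧ indel x y = 2 := by
  obtain ⟨hne, s, hs1, hs2, a, j, hj1, hj2, hyy⟩ := hy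
  set z := x.insertIdx (s - 1) a with hz
  have hzlen : z.length = x.length + 1 := List.length_insertIdx_of_le_length (by omega) a
  have hje : j - 1 < z.length := by omega
  have hy' : y = z.eraseIdx (j - 1) := by rw [hyy, delF_singleton _ _ hj1]
  have hylen : y.length = x.length := by
    rw [hy', List.length_eraseIdx, if_pos hje]
    omega
  have step1 : EditStep x z := Or.inl ⟨s - 1, a, rfl⟩
  have step2 : EditStep z y := Or.inr ⟨j - 1, z[j - 1]'hje, by
    rw [hy']; exact (insertIdx_eraseIdx_getElem z (j - 1) hje).symm⟩
  have hle : indel x y ≤ 2 :=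
    indel_le (reachesN_trans (editStep_single step1) (editStep_single step2))
  have hform := indel_add_lcs x y
  have hne0 : indel x y ≠ 0 := by
    intro h0
    have hlx : lcs x y = x.length := by omega
    obtain ⟨t, htx, hty, htl⟩ := exists_lcs x y
    have htx' : t = x := htx.eq_of_length (by omega)
    have hty' : t = y := hty.eq_of_length (by omega)
    exact hne (htx' ▸ hty').symm
  refine ⟨hne, hylen, by omega⟩

/-! ### From arc counts to ncard -/

lemma countArc_one_ncard {A : ℕ × ℕ → ℕ × ℕ → Prop} (g : (ℕ × ℕ) × (ℕ × ℕ) → ℕ)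
    {P : List (ℕ × ℕ)} (h : countArc A P = 1) :
    ({ i | ∃ pq ∈ P.zip P.tail, A pq.1 pq.2 ∧ g pq = i } : Set ℕ).ncard = 1 := by
  unfold countArc at h
  rw [List.countP_eq_length_filter, List.length_eq_one_iff] at h
  obtain ⟨pq0, hpq0⟩ := h
  have hmem : pq0 ∈ (P.zip P.tail).filter (fun pq => decide (A pq.1 pq.2)) := by
    rw [hpq0]; exact List.mem_singleton_self pq0
  rw [List.mem_filter] at hmem
  have hA0 : A pq0.1 pq0.2 := of_decide_eq_true hmem.2
  have hset : { i | ∃ pq ∈ P.zip P.tail, A pq.1 pq.2 ∧ g pq = i } = {g pq0} := by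
    ext i
    simp only [Set.mem_setOf_eq, Set.mem_singleton_iff]
    constructor
    · rintro ⟨pq, hmem', hA, rfl⟩
      have hpf : pq ∈ (P.zip P.tail).filter (fun pq => decide (A pq.1 pq.2)) :=
        List.mem_filter.mpr ⟨hmem', decide_eq_true hA⟩
      rw [hpq0, List.mem_singleton] at hpf
      rw [hpf]
    · rintro rfl
      exact ⟨pq0, hmem.1, hA0, rfl⟩
  rw [hset, Set.ncard_singleton]

end Aux

/-- for `y ∈ L^{(1)}(x)`, every path of `G_{x,y}` contains exactly
one type-1 arc and one type-3 arc; hence `|f_I(P)| = |f_D(P)| = 1`. -/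
theorem one_type1_one_type3 {α : Type*} (x y : List α) (hy : y ∈ L1 x)
    (P : List (ℕ × ℕ)) (hP : IsPath x y P) :
    countArc (IsArc1 x y) P = 1 ∧ countArc (IsArc3 x y) P = 1 ∧
    (fI x y P).ncard = 1 ∧ (fD x y P).ncard = 1 := by
  obtain ⟨hc, hhd, hl⟩ := hP
  obtain ⟨hne, hylen, hind⟩ := L1_facts hy
  obtain ⟨e1, e2, e3⟩ := path_counts x y P x.length y.length hc hhd hl
  have hhn : hh x y x.length y.length = 2 := by
    show indel (x.take x.length) (y.take y.length) = 2
    rw [List.take_length, List.take_length]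
    exact hind
  rw [hhn] at e3
  have hc1 : countArc (IsArc1 x y) P = 1 := by omega
  have hc3 : countArc (IsArc3 x y) P = 1 := by omega
  exact ⟨hc1, hc3, countArc_one_ncard (fun pq => pq.1.2) hc3,
    countArc_one_ncard (fun pq => pq.1.1) hc1⟩
end
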